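/- For integers m > k ≥ 1, ∑_{j=0}^{m−k} [ (−1)^j / ((m−j−k+1)(j+k)) · C(j+k,j) + (1/(m+1)) · C(m+1,k) · C(m−k+1,j) · H_{j+k−1} ] · B_j = 0, where B_j are the Bernoulli numbers, H_n the harmonic numbers (H_0 = 0), and C(·,·) binomial coefficients. -/

import Mathlib

open Finset
lemma bern_odd_zero {n : ℕ} (h : Odd n) (h2 : 1 < n) : bernoulli n = 0 := by
  rw [bernoulli, bernoulli'_eq_zero_of_odd h h2, mul_zero]

lemma partialB (n : ℕ) : ∀ s, s ≤ n →
    ∑ j ∈ range (s+1), ((n+1).choose j : ℚ) * bernoulli j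
      = (-1)^s * ∑ j ∈ range (s+1), ((n+1).choose j : ℚ) * ((n-j).choose (s-j) : ℚ) * bernoulli j := by
  intro s
  induction s with
  | zero => simp
  | succ s IH =>
    intro hs1
    have hs : s ≤ n := by omega
    have key : ∑ j ∈ range (s+1), ((n+1).choose j : ℚ) * ((n-j).choose (s+1-j) : ℚ) * bernoulli j
        = ((n+1).choose (s+1) : ℚ) * (if s+1 = 1 then 1 else 0)
          - ∑ j ∈ range (s+1), ((n+1).choose j : ℚ) * ((n-j).choose (s-j) : ℚ) * bernoulli j := by
      rw [eq_sub_iff_add_eq, ← Finset.sum_add_distrib, ← sum_bernoulli (s+1), Finset.mul_sum]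
      refine Finset.sum_congr rfl ?_
      intro j hj
      rw [Finset.mem_range] at hj
      have hj' : j ≤ s := by omega
      have pascal : (n-j).choose (s+1-j) + (n-j).choose (s-j) = (n+1-j).choose (s+1-j) := by
        have h1 : s+1-j = (s-j)+1 := by omega
        have h2 : n+1-j = (n-j)+1 := by omega
        rw [h1, h2, Nat.choose_succ_succ]
        simp only [Nat.succ_eq_add_one]
        omega
      have cm : (n+1).choose (s+1) * (s+1).choose j = (n+1).choose j * ((n+1)-j).choose ((s+1)-j) :=
        Nat.choose_mul (by omega)
      have this1 : ((n+1).choose j : ℚ) * ((n-j).choose (s+1-j) : ℚ) + ((n+1).choose j : ℚ) * ((n-j).choose (s-j) : ℚ)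
          = ((n+1).choose (s+1) : ℚ) * ((s+1).choose j : ℚ) := by
        rw [← mul_add]
        have := congrArg (Nat.cast : ℕ → ℚ) cm
        push_cast [← pascal] at this
        linarith [this]
      linear_combination bernoulli j * this1
    rw [Finset.sum_range_succ, Finset.sum_range_succ (fun j => ((n+1).choose j : ℚ) * ((n-j).choose (s+1-j) : ℚ) * bernoulli j), key, IH hs]
    have htop : (n - (s+1)).choose (s+1-(s+1)) = 1 := by simp
    rw [htop]
    rcases eq_or_ne s 0 with h0 | h0
    · subst h0; norm_num [bernoulli_one]; ring
    · have hif : (if s+1 = 1 then (1:ℚ) else 0) = 0 := by simp [h0]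
      rw [hif]
      have hb : ((-1:ℚ))^(s+1) * bernoulli (s+1) = bernoulli (s+1) := by
        rcases Nat.even_or_odd (s+1) with he | ho
        · rw [he.neg_one_pow, one_mul]
        · rw [bern_odd_zero ho (by omega)]; ring
      push_cast
      linear_combination (-1 : ℚ) * (((n+1).choose (s+1) : ℕ) : ℚ) * hb

lemma betaSum : ∀ (M : ℕ) (q : ℚ), 0 < q →
    ∑ i ∈ range (M+1), (-1)^i * (M.choose i : ℚ) / (q + i) = (Nat.factorial M : ℚ) / ∏ i ∈ range (M+1), (q + i) := by
  intro M
  induction M with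
  | zero => intro q hq; simp
  | succ M IH =>
    intro q hq
    have hq1 : 0 < q + 1 := by linarith
    have hP : ∀ (r : ℚ) (R : ℕ), 0 < r → (0:ℚ) < ∏ i ∈ range R, (r + i) := by
      intro r R hr
      apply Finset.prod_pos
      intro i _
      have : (0:ℚ) ≤ i := by positivity
      linarith
    -- step: A = f(M,q) - f(M,q+1)
    have step : ∑ i ∈ range (M+2), (-1)^i * ((M+1).choose i : ℚ) / (q + i)
        = ∑ i ∈ range (M+1), (-1)^i * (M.choose i : ℚ) / (q + i)
          - ∑ i ∈ range (M+1), (-1)^i * (M.choose i : ℚ) / ((q+1) + i) := by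
      rw [Finset.sum_range_succ' (fun i => (-1)^i * ((M+1).choose i : ℚ) / (q + i)) (M+1)]
      rw [Finset.sum_range_succ' (fun i => (-1)^i * (M.choose i : ℚ) / (q + i)) M]
      push_cast
      have e1 : ∀ i, ((M+1).choose (i+1) : ℚ) = (M.choose i : ℚ) + (M.choose (i+1) : ℚ) := by
        intro i; exact_mod_cast congrArg (Nat.cast : ℕ → ℚ) (Nat.choose_succ_succ M i)
      have split : ∑ i ∈ range (M+1), (-1)^(i+1) * ((M+1).choose (i+1) : ℚ) / (q + (i+1))
          = (∑ i ∈ range (M+1), (-1)^(i+1) * (M.choose i : ℚ) / ((q+1) + i))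
            + ∑ i ∈ range (M+1), (-1)^(i+1) * (M.choose (i+1) : ℚ) / (q + (i+1)) := by
        rw [← Finset.sum_add_distrib]
        refine Finset.sum_congr rfl fun i _ => ?_
        rw [e1 i]
        have : q + (i+1) = (q+1) + i := by push_cast; ring
        rw [this]
        ring
      rw [split]
      have last : ∑ i ∈ range (M+1), (-1)^(i+1) * (M.choose (i+1) : ℚ) / (q + (i+1))
          = ∑ i ∈ range M, (-1)^(i+1) * (M.choose (i+1) : ℚ) / (q + (i+1)) := by
        rw [Finset.sum_range_succ]
        simp
      rw [last]
      have neg : ∑ i ∈ range (M+1), (-1)^(i+1) * (M.choose i : ℚ) / ((q+1) + i)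
          = - ∑ i ∈ range (M+1), (-1)^i * (M.choose i : ℚ) / ((q+1) + i) := by
        rw [← Finset.sum_neg_distrib]
        refine Finset.sum_congr rfl fun i _ => by ring
      rw [neg]
      simp only [Nat.choose_zero_right, Nat.cast_one]
      ring
    rw [step, IH q hq, IH (q+1) hq1]
    have hprod1 : ∏ i ∈ range (M+2), (q + i) = (q + (M+1)) * ∏ i ∈ range (M+1), (q + i) := by
      rw [Finset.prod_range_succ]; push_cast; ring
    have hprod2 : ∏ i ∈ range (M+2), (q + i) = q * ∏ i ∈ range (M+1), ((q+1) + i) := by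
      rw [Finset.prod_range_succ' (fun i => q + (i:ℚ))]
      simp only [Nat.cast_zero, add_zero]
      rw [mul_comm]
      congr 1
      refine Finset.prod_congr rfl fun i _ => by push_cast; ring
    have h1 : (0:ℚ) < ∏ i ∈ range (M+1), (q + i) := hP q _ hq
    have h2 : (0:ℚ) < ∏ i ∈ range (M+1), ((q+1) + i) := hP (q+1) _ hq1
    have hfact : (Nat.factorial (M+1) : ℚ) = (M+1) * (Nat.factorial M : ℚ) := by
      rw [Nat.factorial_succ]; push_cast; ring
    have hQpos : (0:ℚ) < ∏ i ∈ range (M+2), (q + i) := hP q (M+2) hq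
    rw [div_sub_div _ _ (ne_of_gt h1) (ne_of_gt h2), div_eq_div_iff (by positivity) (by positivity), hfact]
    linear_combination ((Nat.factorial M : ℚ) * ∏ i ∈ range (M+1), ((q+1) + i)) * hprod1
      - ((Nat.factorial M : ℚ) * ∏ i ∈ range (M+1), (q + i)) * hprod2

lemma harm_split (K : ℕ) : ∀ j : ℕ, harmonic (j+K) = harmonic K + ∑ t ∈ range j, (1:ℚ)/(K+t+1) := by
  intro j
  induction j with
  | zero => simp
  | succ j IH =>
    have : j + 1 + K = (j + K) + 1 := by omega
    rw [this, harmonic_succ, IH, Finset.sum_range_succ]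
    push_cast
    ring

lemma swap1 (f g : ℕ → ℚ) (N : ℕ) :
    ∑ j ∈ range N, f j * ∑ t ∈ range j, g t = ∑ t ∈ range N, g t * ∑ j ∈ Ico (t+1) N, f j := by
  induction N with
  | zero => simp
  | succ N IH =>
    rw [Finset.sum_range_succ, IH, Finset.sum_range_succ]
    have h1 : ∀ t ∈ range N, g t * ∑ j ∈ Ico (t+1) (N+1), f j
        = g t * ∑ j ∈ Ico (t+1) N, f j + g t * f N := by
      intro t ht
      rw [Finset.mem_range] at ht
      rw [Finset.sum_Ico_succ_top (by omega), mul_add]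
    rw [Finset.sum_congr rfl h1, Finset.sum_add_distrib]
    have h2 : Ico (N+1) (N+1) = ∅ := Finset.Ico_self _
    rw [h2]
    simp only [Finset.sum_empty, mul_zero, add_zero, Finset.mul_sum]
    rw [add_left_cancel_iff]
    exact Finset.sum_congr rfl fun t _ => mul_comm _ _

lemma swap2 (F : ℕ → ℕ → ℚ) (N : ℕ) :
    ∑ t ∈ range N, ∑ j ∈ range (t+1), F t j = ∑ j ∈ range N, ∑ t ∈ Ico j N, F t j := by
  induction N with
  | zero => simp
  | succ N IH =>
    rw [Finset.sum_range_succ, IH]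
    conv_rhs => rw [Finset.sum_range_succ]
    have h1 : ∀ j ∈ range N, ∑ t ∈ Ico j (N+1), F t j
        = ∑ t ∈ Ico j N, F t j + F N j := by
      intro j hj
      rw [Finset.mem_range] at hj
      rw [Finset.sum_Ico_succ_top (by omega)]
    rw [Finset.sum_congr rfl h1, Finset.sum_add_distrib]
    have h2 : ∑ t ∈ Ico N (N+1), F t N = F N N := by
      rw [Finset.sum_Ico_eq_sum_range]
      simp
    rw [h2, Finset.sum_range_succ]
    ring

lemma prodfact (a : ℕ) : ∀ R : ℕ, ∏ i ∈ range R, ((a:ℚ)+1+i) = (Nat.factorial (a+R) : ℚ) / (Nat.factorial a : ℚ) := by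
  intro R
  induction R with
  | zero =>
    have h0 : (Nat.factorial a : ℚ) ≠ 0 := by exact_mod_cast Nat.factorial_ne_zero a
    simp [div_self h0]
  | succ R IH =>
    rw [Finset.prod_range_succ, IH]
    have : a + (R+1) = (a+R) + 1 := by omega
    rw [this, Nat.factorial_succ]
    have h0 : (Nat.factorial a : ℚ) ≠ 0 := by exact_mod_cast Nat.factorial_ne_zero a
    field_simp
    push_cast
    ring

lemma Hp_eq (n K : ℕ) (hn : 1 ≤ n) :
    ∑ j ∈ range (n+1), ((n+1).choose j : ℚ) * bernoulli j * harmonic (j+K)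
    = -∑ j ∈ range (n+1), ((n+1).choose j : ℚ) * bernoulli j *
        ((-1)^j * (Nat.factorial (n-j) : ℚ) * (Nat.factorial (j+K) : ℚ) / (Nat.factorial (n+K+1) : ℚ)) := by
  have hzero : ∑ j ∈ range (n+1), ((n+1).choose j : ℚ) * bernoulli j = 0 := by
    rw [sum_bernoulli]
    simp [Nat.succ_ne_succ, show n + 1 ≠ 1 by omega, show n ≠ 0 by omega]
  -- step 1: split harmonic
  have step1 : ∑ j ∈ range (n+1), ((n+1).choose j : ℚ) * bernoulli j * harmonic (j+K)
      = ∑ j ∈ range (n+1), (((n+1).choose j : ℚ) * bernoulli j) * ∑ t ∈ range j, (1:ℚ)/(K+t+1) := by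
    have : ∀ j ∈ range (n+1), ((n+1).choose j : ℚ) * bernoulli j * harmonic (j+K)
        = (((n+1).choose j : ℚ) * bernoulli j) * harmonic K
          + (((n+1).choose j : ℚ) * bernoulli j) * ∑ t ∈ range j, (1:ℚ)/(K+t+1) := by
      intro j _
      rw [harm_split K j]
      ring
    rw [Finset.sum_congr rfl this, Finset.sum_add_distrib, ← Finset.sum_mul, hzero]
    ring
  rw [step1, swap1 (fun j => ((n+1).choose j : ℚ) * bernoulli j) (fun t => (1:ℚ)/(K+t+1)) (n+1)]
  -- step 2: inner Ico sum = -(partial sum), then partialB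
  have step2 : ∀ t ∈ range (n+1),
      (1:ℚ)/(K+t+1) * ∑ j ∈ Ico (t+1) (n+1), ((n+1).choose j : ℚ) * bernoulli j
      = ∑ j ∈ range (t+1), (-(1:ℚ))/(K+t+1) * (-1)^t * (((n+1).choose j : ℚ) * ((n-j).choose (t-j) : ℚ) * bernoulli j) := by
    intro t ht
    rw [Finset.mem_range] at ht
    rw [Finset.sum_Ico_eq_sub _ (by omega), hzero, partialB n t (by omega), zero_sub, mul_neg,
      Finset.mul_sum, Finset.mul_sum, ← Finset.sum_neg_distrib]
    refine Finset.sum_congr rfl fun j _ => by ring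
  rw [Finset.sum_congr rfl step2,
      swap2 (fun t j => (-(1:ℚ))/(K+t+1) * (-1)^t * (((n+1).choose j : ℚ) * ((n-j).choose (t-j) : ℚ) * bernoulli j)) (n+1)]
  -- step 3: per j, evaluate the inner t-sum via betaSum
  rw [← Finset.sum_neg_distrib]
  refine Finset.sum_congr rfl fun j hj => ?_
  rw [Finset.mem_range] at hj
  have hj' : j ≤ n := by omega
  have hMc : n + 1 - j = (n - j) + 1 := by omega
  rw [Finset.sum_Ico_eq_sum_range, hMc]
  have hq : (0:ℚ) < (K:ℚ)+(j:ℚ)+1 := by positivity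
  have hprod := prodfact (K+j) ((n-j)+1)
  have hKj : K + j + ((n-j)+1) = n + K + 1 := by omega
  rw [hKj] at hprod
  have hcast : ∀ i ∈ range ((n-j)+1), ((K+j:ℕ):ℚ)+1+(i:ℚ) = ((K:ℚ)+(j:ℚ)+1) + (i:ℚ) := by
    intro i _; push_cast; ring
  rw [Finset.prod_congr rfl hcast] at hprod
  have key : ∑ i ∈ range ((n-j)+1),
      (-(1:ℚ))/(K+(j+i : ℕ)+1) * (-1)^(j+i) * (((n+1).choose j : ℚ) * ((n-j).choose (j+i-j) : ℚ) * bernoulli j)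
      = (-(((n+1).choose j : ℚ) * bernoulli j * (-1)^j)) *
        ∑ i ∈ range ((n-j)+1), (-1)^i * ((n-j).choose i : ℚ) / (((K:ℚ)+(j:ℚ)+1) + i) := by
    rw [Finset.mul_sum]
    refine Finset.sum_congr rfl fun i _ => ?_
    rw [Nat.add_sub_cancel_left]
    push_cast
    ring
  rw [key, betaSum (n-j) ((K:ℚ)+(j:ℚ)+1) hq, hprod]
  have h1 : (Nat.factorial (K+j) : ℚ) ≠ 0 := by exact_mod_cast Nat.factorial_ne_zero _
  have h2 : (Nat.factorial (n+K+1) : ℚ) ≠ 0 := by exact_mod_cast Nat.factorial_ne_zero _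
  have h3 : (j+K) = (K+j) := by omega
  rw [h3]
  field_simp
  try ring
  try tauto

lemma termwise (n K j : ℕ) (hj : j ≤ n) :
    (-1:ℚ)^j / (((n:ℚ) + ((K:ℚ)+1) - j - ((K:ℚ)+1) + 1) * ((j:ℚ) + ((K:ℚ)+1))) * ((j+(K+1)).choose j : ℚ)
    = (1 / ((n:ℚ) + ((K:ℚ)+1) + 1)) * (((n+(K+1)+1).choose (K+1) : ℕ) : ℚ) * (((n+1).choose j : ℕ) : ℚ)
      * ((-1)^j * ((n-j).factorial : ℚ) * ((j+K).factorial : ℚ) / ((n+K+1).factorial : ℚ)) := by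
  have hA : ((j+(K+1)).choose j : ℚ) = ((j+(K+1)).factorial : ℚ) / ((j.factorial : ℚ) * ((K+1).factorial : ℚ)) := by
    rw [Nat.cast_choose ℚ (Nat.le_add_right j (K+1)), Nat.add_sub_cancel_left]
  have hB : (((n+(K+1)+1).choose (K+1) : ℕ) : ℚ)
      = ((n+(K+1)+1).factorial : ℚ) / (((K+1).factorial : ℚ) * ((n+1).factorial : ℚ)) := by
    rw [Nat.cast_choose ℚ (by omega), show n+(K+1)+1-(K+1) = n+1 from by omega]
  have hC : (((n+1).choose j : ℕ) : ℚ) = ((n+1).factorial : ℚ) / ((j.factorial : ℚ) * ((n+1-j).factorial : ℚ)) := by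
    rw [Nat.cast_choose ℚ (by omega)]
  have e1 : ((j+(K+1)).factorial : ℚ) = ((j:ℚ)+(K:ℚ)+1) * ((j+K).factorial : ℚ) := by
    rw [show j+(K+1) = (j+K)+1 by omega, Nat.factorial_succ]
    push_cast; ring
  have e2 : ((n+(K+1)+1).factorial : ℚ) = ((n:ℚ)+(K:ℚ)+2) * ((n+K+1).factorial : ℚ) := by
    rw [show n+(K+1)+1 = (n+K+1)+1 by omega, Nat.factorial_succ]
    push_cast; ring
  have e3 : ((n+1-j).factorial : ℚ) = (((n:ℚ)+1) - (j:ℚ)) * ((n-j).factorial : ℚ) := by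
    rw [show n+1-j = (n-j)+1 by omega, Nat.factorial_succ]
    push_cast [Nat.cast_sub hj]
    ring
  rw [hA, hB, hC, e1, e2, e3]
  have hnj : (0:ℚ) < (n:ℚ) + 1 - j := by
    have : (j:ℚ) ≤ n := by exact_mod_cast hj
    linarith
  have f1 : (j.factorial : ℚ) ≠ 0 := by exact_mod_cast Nat.factorial_ne_zero _
  have f2 : ((K+1).factorial : ℚ) ≠ 0 := by exact_mod_cast Nat.factorial_ne_zero _
  have f3 : ((n+1).factorial : ℚ) ≠ 0 := by exact_mod_cast Nat.factorial_ne_zero _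
  have f4 : ((n+K+1).factorial : ℚ) ≠ 0 := by exact_mod_cast Nat.factorial_ne_zero _
  have f5 : ((n-j).factorial : ℚ) ≠ 0 := by exact_mod_cast Nat.factorial_ne_zero _
  have f6 : ((j+K).factorial : ℚ) ≠ 0 := by exact_mod_cast Nat.factorial_ne_zero _
  have g1 : ((n:ℚ) + ((K:ℚ)+1) - j - ((K:ℚ)+1) + 1) = (n:ℚ) + 1 - j := by ring
  rw [g1]
  have g2 : (j:ℚ) + ((K:ℚ)+1) ≠ 0 := by positivity
  have g3 : (n:ℚ) + ((K:ℚ)+1) + 1 ≠ 0 := by positivity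
  field_simp
  ring

/-- For integers `m > k ≥ 1`,
`∑_{j=0}^{m−k} [(−1)^j/((m−j−k+1)(j+k)) C(j+k,j) + C(m+1,k) C(m−k+1,j) H_{j+k−1}/(m+1)] B_j = 0`. -/
theorem bernoulli_harmonic_identity_general (m k : ℕ) (hk : 1 ≤ k) (hmk : k < m) :
    ∑ j ∈ Finset.range (m - k + 1),
      ((-1 : ℚ) ^ j / (((m : ℚ) - j - k + 1) * ((j : ℚ) + k)) * ((j + k).choose j : ℚ) +
        (1 / ((m : ℚ) + 1)) * ((m + 1).choose k : ℚ) * ((m - k + 1).choose j : ℚ) *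
          harmonic (j + k - 1)) * bernoulli j = 0 := by
  obtain ⟨K, rfl⟩ : ∃ K, k = K + 1 := ⟨k - 1, by omega⟩
  obtain ⟨n, hn, rfl⟩ : ∃ n, 1 ≤ n ∧ m = n + (K + 1) := ⟨m - (K+1), by omega, by omega⟩
  have hrange : n + (K+1) - (K+1) = n := by omega
  simp only [hrange]
  have split : ∀ j ∈ range (n+1),
      ((-1 : ℚ) ^ j / (((((n + (K+1) : ℕ)) : ℚ) - j - ((K+1 : ℕ) : ℚ) + 1) * ((j : ℚ) + ((K+1 : ℕ) : ℚ)))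
          * ((j + (K+1)).choose j : ℚ) +
        (1 / ((((n + (K+1) : ℕ)) : ℚ) + 1)) * (((n + (K+1) + 1).choose (K+1) : ℕ) : ℚ) * (((n+1).choose j : ℕ) : ℚ) * harmonic (j + (K+1) - 1)) * bernoulli j
      = ((1 / ((((n + (K+1) : ℕ)) : ℚ) + 1)) * (((n + (K+1) + 1).choose (K+1) : ℕ) : ℚ)) * ((((n+1).choose j : ℕ) : ℚ) * bernoulli j * harmonic (j+K))
        + ((1 / ((((n + (K+1) : ℕ)) : ℚ) + 1)) * (((n + (K+1) + 1).choose (K+1) : ℕ) : ℚ)) * ((((n+1).choose j : ℕ) : ℚ) * bernoulli j *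
            ((-1)^j * ((n-j).factorial : ℚ) * ((j+K).factorial : ℚ) / ((n+K+1).factorial : ℚ))) := by
    intro j hj
    rw [Finset.mem_range] at hj
    have harg : j + (K+1) - 1 = j + K := by omega
    rw [harg]
    have ht := termwise n K j (by omega)
    push_cast at ht ⊢
    rw [ht]
    ring
  rw [Finset.sum_congr rfl split, Finset.sum_add_distrib, ← Finset.mul_sum, ← Finset.mul_sum,
    Hp_eq n K hn]
  ring
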